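/- Let F be a finite field, let n, k, α be positive integers with k < n, set m = n - k, and let a_1,...,a_m, b_1,...,b_n be 2n - k pairwise distinct elements of F. Let A be the m × n Cauchy matrix with (i,j) entry 1/(a_i - b_j), let J = A ⊗ I_α (Kronecker product with the α × α identity), and let E be any mα × nα matrix over F all of whose entries lie in {0,1}. If |F| > C(n, n-k)·(n-k)·α (where C(n,n-k) is the binomial coefficient), then there exists ρ ∈ F such that for every subset S ⊆ {1,...,n} with |S| = m, the mα × mα block submatrix (J + ρ·E)(:,S) is invertible; consequently every nonzero vector in the kernel of J + ρ·E has block Hamming weight at least n - k + 1, i.e., the code defined by the parity-check matrix J + ρ·E is an MDS vector code. -/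

import Mathlib

open Kronecker Polynomial Finset Matrix

lemma cauchy_det_ne_zero {F : Type*} [Field F] {m : ℕ} (a b : Fin m → F)
    (ha : Function.Injective a) (hb : Function.Injective b)
    (hab : ∀ i j, a i ≠ b j) :
    (Matrix.of fun i j => (a i - b j)⁻¹).det ≠ 0 := by
  classical
  intro h
  obtain ⟨v, hv0, hvz⟩ := Matrix.exists_mulVec_eq_zero_iff.mpr h
  set P : F[X] := ∑ j, C (v j) * ∏ l ∈ univ.erase j, (X - C (b l)) with hP
  have hm : 0 < m := by
    rcases Function.ne_iff.mp hv0 with ⟨j, -⟩; exact j.pos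
  have hdeg : P.natDegree < m := by
    have : P.natDegree ≤ m - 1 := by
      apply natDegree_sum_le_of_forall_le
      intro j _
      refine (natDegree_mul_le).trans ?_
      simp only [natDegree_C, zero_add]
      refine (natDegree_prod_le _ _).trans ?_
      calc ∑ l ∈ univ.erase j, (X - C (b l)).natDegree
          ≤ ∑ l ∈ univ.erase j, 1 := by
            exact Finset.sum_le_sum fun l _ => (natDegree_X_sub_C (b l)).le
        _ = m - 1 := by simp [Finset.card_erase_of_mem]
    omega
  have hPzero : P = 0 := by
    apply Polynomial.eq_zero_of_natDegree_lt_card_of_eval_eq_zero P ha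
    · intro i
      have hrow : ∑ j, (a i - b j)⁻¹ * v j = 0 := by
        have := congrFun hvz i
        simpa [Matrix.mulVec, dotProduct] using this
      have key : P.eval (a i) = (∏ l, (a i - b l)) * ∑ j, (a i - b j)⁻¹ * v j := by
        rw [Finset.mul_sum, hP]
        simp only [eval_finset_sum, eval_mul, eval_C, eval_prod, eval_sub, eval_X]
        refine Finset.sum_congr rfl fun j _ => ?_
        have hne : a i - b j ≠ 0 := sub_ne_zero.mpr (hab i j)
        rw [← Finset.mul_prod_erase univ _ (Finset.mem_univ j)]
        field_simp
      rw [key, hrow, mul_zero]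
    · simpa using hdeg
  apply hv0
  funext j
  have : P.eval (b j) = v j * ∏ l ∈ univ.erase j, (b j - b l) := by
    rw [hP]
    simp only [eval_finset_sum, eval_mul, eval_C, eval_prod, eval_sub, eval_X]
    rw [Finset.sum_eq_single j]
    · intro j' _ hj'
      have : j ∈ univ.erase j' := by simp [hj'.symm]
      rw [Finset.prod_eq_zero this (by simp), mul_zero]
    · simp
  rw [hPzero, eval_zero] at this
  have hprod : ∏ l ∈ univ.erase j, (b j - b l) ≠ 0 := by
    apply Finset.prod_ne_zero_iff.mpr
    intro l hl
    exact sub_ne_zero.mpr fun e => (Finset.mem_erase.mp hl).1 (hb e).symm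
  exact (mul_eq_zero.mp this.symm).resolve_right hprod

lemma eval_det_poly {F : Type*} [Field F] {ι : Type*} [Fintype ι] [DecidableEq ι]
    (M N : Matrix ι ι F) (ρ : F) :
    ((M.map C + (X : F[X]) • N.map C).det).eval ρ = (M + ρ • N).det := by
  have h := (evalRingHom ρ).map_det (M.map C + (X : F[X]) • N.map C)
  rw [RingHom.mapMatrix_apply] at h
  rw [coe_evalRingHom] at h
  rw [h]
  congr 1
  ext i j
  simp only [Matrix.map_apply, Matrix.add_apply, Matrix.smul_apply, smul_eq_mul,
    coe_evalRingHom, eval_add, eval_mul, eval_C, eval_X]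

lemma natDegree_det_poly_le {F : Type*} [Field F] {ι : Type*} [Fintype ι] [DecidableEq ι]
    (M N : Matrix ι ι F) :
    ((M.map C + (X : F[X]) • N.map C).det).natDegree ≤ Fintype.card ι := by
  rw [Matrix.det_apply']
  apply natDegree_sum_le_of_forall_le
  intro σ _
  refine (natDegree_mul_le).trans ?_
  rw [natDegree_intCast, zero_add]
  refine (natDegree_prod_le _ _).trans ?_
  calc ∑ i, ((M.map C + (X : F[X]) • N.map C) (σ i) i).natDegree
      ≤ ∑ _i : ι, 1 := by
        refine Finset.sum_le_sum fun i _ => ?_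
        simp only [Matrix.add_apply, Matrix.map_apply, Matrix.smul_apply, smul_eq_mul]
        refine (natDegree_add_le _ _).trans ?_
        simp only [natDegree_C, max_eq_right (Nat.zero_le _)]
        refine (natDegree_mul_le).trans ?_
        simp [natDegree_X_le]
    _ = Fintype.card ι := by simp

noncomputable def pdet {F : Type*} [Field F] {m n α : ℕ}
    (J E : Matrix (Fin m × Fin α) (Fin n × Fin α) F) (g : Fin m → Fin n) : F[X] :=
  ((J.submatrix id fun p : Fin m × Fin α => (g p.1, p.2)).map C
    + (X : F[X]) • (E.submatrix id fun p : Fin m × Fin α => (g p.1, p.2)).map C).det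

lemma pdet_eval {F : Type*} [Field F] {m n α : ℕ}
    (J E : Matrix (Fin m × Fin α) (Fin n × Fin α) F) (g : Fin m → Fin n) (ρ : F) :
    (pdet J E g).eval ρ
      = ((J + ρ • E).submatrix id fun p : Fin m × Fin α => (g p.1, p.2)).det := by
  rw [pdet, eval_det_poly]
  rfl

lemma pdet_natDegree_le {F : Type*} [Field F] {m n α : ℕ}
    (J E : Matrix (Fin m × Fin α) (Fin n × Fin α) F) (g : Fin m → Fin n) :
    (pdet J E g).natDegree ≤ m * α := by
  rw [pdet]
  refine (natDegree_det_poly_le _ _).trans ?_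
  simp

lemma pdet_ne_zero {F : Type*} [Field F] {m n α : ℕ}
    (a : Fin m → F) (b : Fin n → F)
    (ha : Function.Injective a) (hb : Function.Injective b)
    (hab : ∀ i j, a i ≠ b j)
    (E : Matrix (Fin m × Fin α) (Fin n × Fin α) F)
    (g : Fin m → Fin n) (hg : Function.Injective g) :
    pdet ((Matrix.of fun i j => (a i - b j)⁻¹) ⊗ₖ (1 : Matrix (Fin α) (Fin α) F)) E g ≠ 0 := by
  intro hzero
  have he := pdet_eval ((Matrix.of fun i j => (a i - b j)⁻¹) ⊗ₖ (1 : Matrix (Fin α) (Fin α) F))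
    E g 0
  rw [hzero, eval_zero, zero_smul, add_zero] at he
  have hJsub : (((Matrix.of fun i j => (a i - b j)⁻¹)
        ⊗ₖ (1 : Matrix (Fin α) (Fin α) F)).submatrix id
        (fun p : Fin m × Fin α => (g p.1, p.2)))
      = ((Matrix.of fun i j => (a i - b j)⁻¹).submatrix id g)
        ⊗ₖ (1 : Matrix (Fin α) (Fin α) F) := by
    ext ⟨i1, i2⟩ ⟨j1, j2⟩
    simp [Matrix.submatrix_apply, Matrix.kroneckerMap_apply]
  rw [hJsub, Matrix.det_kronecker, Matrix.det_one, one_pow, mul_one] at he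
  have hc : ((Matrix.of fun i j => (a i - b j)⁻¹).submatrix id g).det ≠ 0 := by
    have : (Matrix.of fun i j => (a i - b j)⁻¹).submatrix id g
        = Matrix.of fun i j => (a i - b (g j))⁻¹ := rfl
    rw [this]
    exact cauchy_det_ne_zero a (b ∘ g) ha (hb.comp hg) (fun i j => hab i (g j))
  exact pow_ne_zero (Fintype.card (Fin α)) hc he.symm

/-- The `mα × mα` block submatrix of an `mα × nα` matrix `H` (viewed as an `m × n` array of
`α × α` blocks) formed by the block columns indexed by a subset `S` of `{1,...,n}` of size `m`. -/
noncomputable def blockSub {F : Type*} {m n α : ℕ}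
    (H : Matrix (Fin m × Fin α) (Fin n × Fin α) F)
    {S : Finset (Fin n)} (hS : S.card = m) :
    Matrix (Fin m × Fin α) (Fin m × Fin α) F :=
  H.submatrix id (fun p => ((S.orderIsoOfFin hS p.1 : Fin n), p.2))

set_option maxHeartbeats 1600000 in
/-- for `J = A ⊗ I_α` with `A` an `(n-k) × n` Cauchy matrix, and `E` any
`(n-k)α × nα` matrix with entries in `{0,1}`, if `|F| > C(n, n-k)·(n-k)·α` then there is a
scalar `ρ` such that every block submatrix of `J + ρE` on `n - k` block columns is invertible;
consequently `J + ρE` is the parity check matrix of an MDS vector code: every nonzero vector in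
its kernel has block Hamming weight at least `n - k + 1`. -/
theorem exists_rho_mds
    {F : Type*} [Field F] [Fintype F] {n k α : ℕ}
    (hk : 0 < k) (hα : 0 < α) (hkn : k < n)
    (a : Fin (n - k) → F) (b : Fin n → F)
    (hdistinct : Function.Injective (Sum.elim a b))
    (E : Matrix (Fin (n - k) × Fin α) (Fin n × Fin α) F)
    (hE : ∀ p q, E p q = 0 ∨ E p q = 1)
    (hF : Nat.choose n (n - k) * ((n - k) * α) < Fintype.card F) :
    ∃ ρ : F,
      (∀ (S : Finset (Fin n)) (hS : S.card = n - k),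
        IsUnit (blockSub
          ((Matrix.of fun i j => (a i - b j)⁻¹) ⊗ₖ (1 : Matrix (Fin α) (Fin α) F) + ρ • E)
          hS).det) ∧
      ∀ c : Fin n × Fin α → F,
        ((Matrix.of fun i j => (a i - b j)⁻¹) ⊗ₖ (1 : Matrix (Fin α) (Fin α) F)
          + ρ • E).mulVec c = 0 → c ≠ 0 →
        n - k + 1 ≤ {i : Fin n | ∃ j : Fin α, c (i, j) ≠ 0}.ncard := by
  classical
  have ha : Function.Injective a := fun i j h => by
    have := hdistinct (show Sum.elim a b (Sum.inl i) = Sum.elim a b (Sum.inl j) from h)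
    exact Sum.inl_injective this
  have hb : Function.Injective b := fun i j h => by
    have := hdistinct (show Sum.elim a b (Sum.inr i) = Sum.elim a b (Sum.inr j) from h)
    exact Sum.inr_injective this
  have hab : ∀ i j, a i ≠ b j := fun i j h => by
    have := hdistinct (show Sum.elim a b (Sum.inl i) = Sum.elim a b (Sum.inr j) from h)
    simp at this
  set J : Matrix (Fin (n - k) × Fin α) (Fin n × Fin α) F :=
    (Matrix.of fun i j => (a i - b j)⁻¹) ⊗ₖ (1 : Matrix (Fin α) (Fin α) F) with hJ
  have colinj : ∀ (S : Finset (Fin n)) (hS : S.card = n - k),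
      Function.Injective (fun i => ((S.orderIsoOfFin hS i : Fin n))) := by
    intro S hS i j h
    exact (S.orderIsoOfFin hS).injective (Subtype.coe_injective h)
  set P : F[X] := ∏ t ∈ (Finset.powersetCard (n - k) (univ : Finset (Fin n))).attach,
    pdet J E (fun i => ((t.1.orderIsoOfFin (Finset.mem_powersetCard.mp t.2).2 i : Fin n)))
    with hP
  have hPne : P ≠ 0 := by
    rw [hP]
    refine Finset.prod_ne_zero_iff.mpr fun t _ => ?_
    rw [hJ]
    exact pdet_ne_zero a b ha hb hab E _ (colinj _ _)
  have hPdeg : P.natDegree ≤ Nat.choose n (n - k) * ((n - k) * α) := by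
    rw [hP]
    refine (natDegree_prod_le _ _).trans ?_
    refine (Finset.sum_le_card_nsmul _ _ ((n - k) * α)
      fun t _ => pdet_natDegree_le _ _ _).trans ?_
    simp [Finset.card_attach, Finset.card_powersetCard, smul_eq_mul]
  obtain ⟨ρ, hρ⟩ := Polynomial.exists_eval_ne_zero_of_natDegree_lt_card P hPne
    (by rw [Cardinal.mk_fintype]; exact_mod_cast hPdeg.trans_lt hF)
  have key : ∀ (S : Finset (Fin n)) (hS : S.card = n - k),
      IsUnit (blockSub (J + ρ • E) hS).det := by
    intro S hS
    have hmem : S ∈ Finset.powersetCard (n - k) (univ : Finset (Fin n)) :=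
      Finset.mem_powersetCard.mpr ⟨Finset.subset_univ S, hS⟩
    have hfac : (pdet J E (fun i => ((S.orderIsoOfFin hS i : Fin n)))).eval ρ ≠ 0 := by
      intro h0
      apply hρ
      rw [hP, eval_prod]
      exact Finset.prod_eq_zero (Finset.mem_attach _ ⟨S, hmem⟩) h0
    have hdet : (blockSub (J + ρ • E) hS).det
        = (pdet J E (fun i => ((S.orderIsoOfFin hS i : Fin n)))).eval ρ := by
      rw [pdet_eval]
      rfl
    rw [hdet]
    exact isUnit_iff_ne_zero.mpr hfac
  refine ⟨ρ, key, ?_⟩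
  intro c hker hc
  set T : Finset (Fin n) := univ.filter (fun i => ∃ j, c (i, j) ≠ 0) with hT
  have hsetT : {i : Fin n | ∃ j : Fin α, c (i, j) ≠ 0} = ↑T := by
    ext i; simp [hT]
  rw [hsetT, Set.ncard_coe_finset]
  by_contra hlt
  push_neg at hlt
  have hTc : T.card ≤ n - k := by omega
  obtain ⟨S, hTS, hScard⟩ := Finset.exists_superset_card_eq hTc
    (by simp only [Fintype.card_fin]; omega)
  set σ := S.orderIsoOfFin hScard with hσ
  set c' : Fin (n - k) × Fin α → F := fun p => c ((σ p.1 : Fin n), p.2) with hc'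
  have hzero : ∀ q1 : Fin n, q1 ∉ S → ∀ j, c (q1, j) = 0 := by
    intro q1 hq1 j
    by_contra hne
    have hmemT : q1 ∈ T := by
      rw [hT]
      simp only [Finset.mem_filter, Finset.mem_univ, true_and]
      exact ⟨j, hne⟩
    exact hq1 (hTS hmemT)
  have hmul : (blockSub (J + ρ • E) hScard).mulVec c' = 0 := by
    funext r
    have full : ∑ q1 : Fin n, ∑ j : Fin α, (J + ρ • E) r (q1, j) * c (q1, j) = 0 := by
      have h0 := congrFun hker r
      simpa [Matrix.mulVec, dotProduct, Fintype.sum_prod_type] using h0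
    have restr : ∑ q1 ∈ S, ∑ j : Fin α, (J + ρ • E) r (q1, j) * c (q1, j)
        = ∑ q1 : Fin n, ∑ j : Fin α, (J + ρ • E) r (q1, j) * c (q1, j) := by
      apply Finset.sum_subset (Finset.subset_univ S)
      intro q1 _ hq1
      simp [hzero q1 hq1]
    have reidx : ∑ i : Fin (n - k), ∑ j : Fin α, (J + ρ • E) r ((σ i : Fin n), j)
          * c ((σ i : Fin n), j)
        = ∑ q1 ∈ S, ∑ j : Fin α, (J + ρ • E) r (q1, j) * c (q1, j) := by
      rw [← Finset.sum_coe_sort S (fun q1 => ∑ j : Fin α, (J + ρ • E) r (q1, j) * c (q1, j))]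
      exact Equiv.sum_comp σ.toEquiv
        (fun x : S => ∑ j : Fin α, (J + ρ • E) r ((x : Fin n), j) * c ((x : Fin n), j))
    have expand : (blockSub (J + ρ • E) hScard).mulVec c' r
        = ∑ i : Fin (n - k), ∑ j : Fin α, (J + ρ • E) r ((σ i : Fin n), j)
            * c ((σ i : Fin n), j) := by
      simp [blockSub, Matrix.mulVec, dotProduct, Fintype.sum_prod_type, hc', hσ]
    rw [Pi.zero_apply, expand, reidx, restr, full]
  have hunit := key S hScard
  have hinj : Function.Injective (blockSub (J + ρ • E) hScard).mulVec :=
    Matrix.mulVec_injective_iff_isUnit.mpr ((Matrix.isUnit_iff_isUnit_det _).mpr hunit)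
  have hc'0 : c' = 0 := hinj (by rw [hmul, Matrix.mulVec_zero])
  apply hc
  funext q
  obtain ⟨q1, q2⟩ := q
  by_cases hq : q1 ∈ S
  · have := congrFun hc'0 (σ.symm ⟨q1, hq⟩, q2)
    simpa [hc', OrderIso.apply_symm_apply] using this
  · exact hzero q1 hq q2
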